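/- arXiv:2408.04059 — 7 statements merged into one kernel-verified Lean document; each statement's English description precedes it below -/
import Mathlib

section
/- The map ι from Aut(G) to Aut(F_k(G)), sending f to the automorphism A ↦ f(A) = {f(a) : a ∈ A}, is an injective group homomorphism, provided G has at least one edge and 1 ≤ k ≤ n−1. -/
open scoped Classical symmDiff

variable {V : Type*}

/-- The `k`-token graph of `G`: vertices are the `k`-subsets of `V(G)`,
two being adjacent iff their symmetric difference is an edge of `G`. -/
def tokenGraph [DecidableEq V] (G : SimpleGraph V) (k : ℕ) :
    SimpleGraph {A : Finset V // A.card = k} where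
  Adj A B := ∃ a b : V, G.Adj a b ∧ (A.1 ∆ B.1) = {a, b}
  symm := by
    constructor
    rintro A B ⟨a, b, hab, h⟩
    exact ⟨a, b, hab, by rwa [symmDiff_comm]⟩
  loopless := by
    constructor
    rintro A ⟨a, b, hab, h⟩
    rw [symmDiff_self] at h
    exact (Finset.insert_ne_empty a {b}) h.symm

/-- `S` is a 2-cut with the same neighbours: a 2-element vertex set whose removal
disconnects `G` and whose two vertices have the same neighbours outside `S`. -/
def SameNbrCut (G : SimpleGraph V) (S : Finset V) : Prop :=
  S.card = 2 ∧ ¬ (G.induce ((↑S : Set V)ᶜ)).Preconnected ∧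
    ∀ x ∈ S, ∀ y ∈ S, ∀ v ∉ S, (G.Adj x v ↔ G.Adj y v)

/-- `A^S = (A \ S) ∪ (S \ A)`. -/
def tokenMove [DecidableEq V] (A S : Finset V) : Finset V := (A \ S) ∪ (S \ A)

/-- The connected components of `G \ S`. -/
abbrev delComp (G : SimpleGraph V) (S : Finset V) :=
  (G.induce ((↑S : Set V)ᶜ)).ConnectedComponent

/-- The distribution tuple of `A` over the components of `G \ S`. -/
noncomputable def compDist (G : SimpleGraph V) (S : Finset V) (A : Finset V)
    (c : delComp G S) : ℕ :=
  {v : ((↑S : Set V)ᶜ : Set V) | (v : V) ∈ A ∧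
    (G.induce ((↑S : Set V)ᶜ)).connectedComponentMk v = c}.ncard

/-- `T_S`: distribution tuples with `kᵢ ≤ nᵢ` summing to `k - 1`. -/
def TS (G : SimpleGraph V) (S : Finset V) (k : ℕ) : Set (delComp G S → ℕ) :=
  {t | (∀ c, t c ≤ c.supp.ncard) ∧ ∑ᶠ c, t c = k - 1}

/-- The map `φ_{S,α}` on `k`-subsets. -/
noncomputable def phiFun [DecidableEq V] (G : SimpleGraph V) (S : Finset V)
    (α : Set (delComp G S → ℕ)) (A : Finset V) : Finset V :=
  if compDist G S A ∈ α then tokenMove A S else A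

/-- The map `ψ_β`, the composition of the `φ_{Sᵢ,βᵢ}`. -/
noncomputable def psiFun [DecidableEq V] (G : SimpleGraph V) {q : ℕ}
    (S : Fin q → Finset V) (β : ∀ i, Set (delComp G (S i) → ℕ)) :
    Finset V → Finset V :=
  (List.ofFn (fun i => phiFun G (S i) (β i))).foldr (· ∘ ·) id
lemma tokenGraph_adj_image [DecidableEq V] (G : SimpleGraph V) (f : G ≃g G) {A B : Finset V}
    (h : ∃ a b, G.Adj a b ∧ A ∆ B = {a, b}) :
    ∃ a b, G.Adj a b ∧ (A.image f) ∆ (B.image f) = {a, b} := by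
  obtain ⟨a, b, hab, h⟩ := h
  have hfi : Function.Injective (f : V → V) := f.toEquiv.injective
  refine ⟨f a, f b, f.map_adj_iff.mpr hab, ?_⟩
  rw [← Finset.image_symmDiff _ _ hfi, h]
  simp

/-- `ι` is an injective group homomorphism `Aut(G) → Aut(F_k(G))`. -/
theorem iota_injective_hom [Fintype V] [DecidableEq V]
    (G : SimpleGraph V) (k : ℕ) (hedge : ∃ a b : V, G.Adj a b)
    (hk1 : 1 ≤ k) (hk2 : k ≤ Fintype.card V - 1) :
    ∃ ι : (G ≃g G) → (tokenGraph G k ≃g tokenGraph G k),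
      (∀ (f : G ≃g G) (A : {A : Finset V // A.card = k}),
          ((ι f A : {B : Finset V // B.card = k}) : Finset V) = Finset.image f (↑A : Finset V)) ∧
      (∀ f g : G ≃g G, ι (f.trans g) = (ι f).trans (ι g)) ∧
      Function.Injective ι := by
  have hcV : 1 ≤ Fintype.card V := by
    obtain ⟨a, b, hab⟩ := hedge
    exact Fintype.card_pos_iff.mpr ⟨a⟩
  refine ⟨fun f =>
    { toFun := fun A => ⟨A.1.image f, by
        exact (Finset.card_image_of_injective _ f.injective).trans A.2⟩
      invFun := fun A => ⟨A.1.image f.symm, by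
        exact (Finset.card_image_of_injective _ f.symm.injective).trans A.2⟩
      left_inv := fun A => Subtype.ext (by
        simp [Finset.image_image, Function.comp_def])
      right_inv := fun A => Subtype.ext (by
        simp [Finset.image_image, Function.comp_def])
      map_rel_iff' := by
        intro A B
        constructor
        · intro h
          have := tokenGraph_adj_image G f.symm h
          show ∃ a b : V, G.Adj a b ∧ (A.1 ∆ B.1) = {a, b}
          simpa [Finset.image_image, Function.comp_def] using this
        · exact tokenGraph_adj_image G f }, fun f A => rfl, ?_, ?_⟩
  · intro f g
    apply RelIso.ext
    intro A
    apply Subtype.ext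
    simp [Finset.image_image, Function.comp_def]
  · intro f g h
    have key : ∀ (C : Finset V), C.card = k → C.image f = C.image g := by
      intro C hC
      exact congrArg (fun e : tokenGraph G k ≃g tokenGraph G k => (e ⟨C, hC⟩).1) h
    apply RelIso.ext
    intro v
    obtain ⟨A, hvA, -, hA⟩ := Finset.exists_subsuperset_card_eq
      (Finset.subset_univ ({v} : Finset V)) (by simpa using hk1) (by simp; omega)
    have hv : v ∈ A := Finset.singleton_subset_iff.mp hvA
    obtain ⟨u, hu⟩ : ∃ u, u ∉ A := by
      by_contra hcon
      push_neg at hcon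
      have hAu : A = Finset.univ := Finset.eq_univ_iff_forall.mpr hcon
      rw [hAu, Finset.card_univ] at hA
      omega
    have hvu : v ≠ u := fun e => hu (e ▸ hv)
    set B := insert u (A.erase v) with hBdef
    have hBcard : B.card = k := by
      rw [hBdef, Finset.card_insert_of_notMem (fun hmem => hu (Finset.mem_of_mem_erase hmem)),
        Finset.card_erase_of_mem hv, hA]
      omega
    have hAB : A \ B = {v} := by
      ext x
      simp only [hBdef, Finset.mem_sdiff, Finset.mem_insert, Finset.mem_erase,
        Finset.mem_singleton]
      constructor
      · rintro ⟨hxA, hx⟩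
        push_neg at hx
        by_contra hxv
        exact (hx.2 hxv) hxA
      · rintro rfl
        exact ⟨hv, by push_neg; exact ⟨hvu, fun hne => absurd rfl hne⟩⟩
    have himg : (A \ B).image f = (A \ B).image g := by
      have hfi : Function.Injective (f : V → V) := f.toEquiv.injective
      have hgi : Function.Injective (g : V → V) := g.toEquiv.injective
      rw [Finset.image_sdiff _ _ hfi, Finset.image_sdiff _ _ hgi, key A hA, key B hBcard]
    rw [hAB] at himg
    simpa using himg
end

section
/- Let G be a connected graph and let S = {x,y} and S' = {w,z} be two distinct 2-cuts with the same neighbours of G. Then S and S' are disjoint. -/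
open scoped Classical symmDiff

variable {V : Type*}

/-- Lemma 1(a): two distinct 2-cuts with the same neighbours are disjoint. -/
theorem sameNbrCuts_disjoint (G : SimpleGraph V) (hG : G.Connected)
    (S S' : Finset V) (hS : SameNbrCut G S) (hS' : SameNbrCut G S')
    (hne : S ≠ S') : Disjoint S S' := by
  classical
  by_contra hdis
  obtain ⟨y, hyS, hyS'⟩ := Finset.not_disjoint_iff.mp hdis
  obtain ⟨w, hwS', hwy⟩ :=
    Finset.exists_mem_ne (by rw [hS'.1]; norm_num) y
  -- w ≠ y, w ∈ S'
  have hpair : ({y, w} : Finset V).card = 2 := Finset.card_pair hwy.symm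
  have hsub' : ({y, w} : Finset V) ⊆ S' := by
    simp [Finset.insert_subset_iff, hyS', hwS']
  have hS'eq : S' = {y, w} :=
    (Finset.eq_of_subset_of_card_le hsub' (by rw [hS'.1, hpair])).symm
  have hwS : w ∉ S := by
    intro hw
    have hsub : ({y, w} : Finset V) ⊆ S := by
      simp [Finset.insert_subset_iff, hyS, hw]
    exact hne (((Finset.eq_of_subset_of_card_le hsub
      (by rw [hS.1, hpair])).symm).trans hS'eq.symm)
  have hwc : w ∈ ((↑S : Set V)ᶜ) := by simpa using hwS
  have key : ∀ (n : ℕ) (u : V) (p : G.Walk u w), p.length ≤ n →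
      ∀ (hu : u ∈ ((↑S : Set V)ᶜ)),
      (G.induce ((↑S : Set V)ᶜ)).Reachable ⟨u, hu⟩ ⟨w, hwc⟩ := by
    intro n
    induction n with
    | zero =>
      intro u p hlen hu
      cases p with
      | nil => exact SimpleGraph.Reachable.refl _
      | cons hadj q => simp [SimpleGraph.Walk.length_cons] at hlen
    | succ n ihn =>
      intro a p hlen hu
      cases p with
      | nil => exact SimpleGraph.Reachable.refl _
      | @cons _ b _ hadj q =>
      have hql : q.length ≤ n := by
        simp [SimpleGraph.Walk.length_cons] at hlen; omega
      have huS : a ∉ S := by simpa using hu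
      by_cases hb : b ∈ ((↑S : Set V)ᶜ)
      · have hedge : (G.induce ((↑S : Set V)ᶜ)).Adj ⟨a, hu⟩ ⟨b, hb⟩ := hadj
        exact hedge.reachable.trans (ihn b q hql hb)
      · -- b ∈ S
        have hbS : b ∈ S := by simpa using hb
        have hay : G.Adj y a := (hS.2.2 b hbS y hyS a huS).mp hadj.symm
        by_cases haw : a = w
        · subst haw; exact SimpleGraph.Reachable.refl _
        · have haS' : a ∉ S' := by
            rw [hS'eq]
            simp only [Finset.mem_insert, Finset.mem_singleton]
            push_neg
            exact ⟨fun h => huS (h ▸ hyS), haw⟩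
          have hwa : G.Adj w a := (hS'.2.2 y hyS' w hwS' a haS').mp hay
          have hedge : (G.induce ((↑S : Set V)ᶜ)).Adj ⟨a, hu⟩ ⟨w, hwc⟩ := hwa.symm
          exact hedge.reachable
  exact hS.2.1 (fun a b => by
    obtain ⟨p⟩ := hG.preconnected a w
    obtain ⟨q⟩ := hG.preconnected b w
    exact (key p.length a p le_rfl a.2).trans (key q.length b q le_rfl b.2).symm)
end

section
/- Let G be a connected graph that is not a 4-cycle, and let S = {x,y} and S' = {w,z} be two distinct 2-cuts with the same neighbours of G. Then w and z lie in the same connected component of G \ S. -/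
open scoped Classical symmDiff

variable {V : Type*}

section Aux
variable [DecidableEq V]
open SimpleGraph

lemma escape {G : SimpleGraph V} {S : Set V} {u t : V} (p : G.Walk u t)
    (hu : u ∉ S) (ht : t ∈ S) :
    ∃ (v : V) (hv : v ∉ S) (s : V), s ∈ S ∧ G.Adj v s ∧
      (G.induce Sᶜ).Reachable ⟨u, hu⟩ ⟨v, hv⟩ := by
  induction p with
  | nil => exact absurd ht hu
  | @cons a b c h q ih =>
    by_cases hb : b ∈ S
    · exact ⟨a, hu, b, hb, h, Reachable.refl _⟩
    · obtain ⟨v, hv, s, hs, hadj, hr⟩ := ih hb ht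
      refine ⟨v, hv, s, hs, hadj, Reachable.trans (Adj.reachable ?_) hr⟩
      exact h

lemma attach {G : SimpleGraph V} (hG : G.Connected) {S : Finset V} (hSne : S.Nonempty)
    (hsame : ∀ a ∈ S, ∀ b ∈ S, ∀ v ∉ S, (G.Adj a v ↔ G.Adj b v))
    {u : V} (hu : u ∈ ((↑S : Set V))ᶜ) :
    ∃ (v : V) (hv : v ∈ ((↑S : Set V))ᶜ), (∀ s ∈ S, G.Adj s v) ∧
      (G.induce ((↑S : Set V))ᶜ).Reachable ⟨u, hu⟩ ⟨v, hv⟩ := by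
  obtain ⟨t, ht⟩ := hSne
  obtain ⟨p⟩ := hG.preconnected u t
  obtain ⟨v, hv, s, hs, hadj, hr⟩ := escape p hu (by simpa using ht)
  refine ⟨v, hv, fun s' hs' => ?_, hr⟩
  have hsS : s ∈ S := by simpa using hs
  have hvS : v ∉ S := by simpa using hv
  exact (hsame s hsS s' hs' v hvS).mp hadj.symm

lemma walk_closed {G : SimpleGraph V} {K : Set V}
    (hK : ∀ a ∈ K, ∀ b, G.Adj a b → b ∈ K) {a u : V} (p : G.Walk a u) (ha : a ∈ K) :
    u ∈ K := by
  induction p with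
  | nil => exact ha
  | @cons a b c h q ih => exact ih (hK a ha b h)

lemma pair_ne {x y : V} (h : ({x, y} : Finset V).card = 2) : x ≠ y := by
  rintro rfl; simp at h

/-- If two same-neighbour 2-cuts share a vertex `x`, contradiction. -/
lemma aux_common {G : SimpleGraph V} (hG : G.Connected) {x y z : V}
    (hS : SameNbrCut G {x, y}) (hS' : SameNbrCut G {x, z})
    (hz : z ∉ ({x, y} : Finset V)) : False := by
  classical
  have hzc : z ∈ ((↑({x, y} : Finset V) : Set V))ᶜ := by simpa using hz
  have hpre : ¬ (G.induce ((↑({x, y} : Finset V) : Set V))ᶜ).Preconnected := hS.2.1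
  rw [SimpleGraph.Preconnected] at hpre
  push_neg at hpre
  obtain ⟨a, b, hab⟩ := hpre
  have key : ∀ c : ↥(((↑({x, y} : Finset V) : Set V))ᶜ),
      (G.induce ((↑({x, y} : Finset V) : Set V))ᶜ).Reachable ⟨z, hzc⟩ c := by
    intro c
    obtain ⟨v, hv, hadj, hr⟩ := attach hG (by simp : ({x, y} : Finset V).Nonempty) hS.2.2 c.2
    rw [Subtype.coe_eta] at hr
    by_cases hvz : v = z
    · subst hvz
      exact hr.symm
    · have hvx : v ≠ x := by intro h; subst h; simp at hv
      have hvS' : v ∉ ({x, z} : Finset V) := by simp [hvx, hvz]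
      have hzx : G.Adj z v := (hS'.2.2 x (by simp) z (by simp) v hvS').mp
        (hadj x (by simp))
      have e1 : (G.induce ((↑({x, y} : Finset V) : Set V))ᶜ).Adj ⟨z, hzc⟩ ⟨v, hv⟩ := hzx
      exact (e1.reachable).trans hr.symm
  exact hab ((key a).symm.trans (key b))

/-- Disjointness of two distinct same-neighbour 2-cuts. -/
lemma not_mem_of_cuts {G : SimpleGraph V} (hG : G.Connected) {x y w z : V}
    (hS : SameNbrCut G {x, y}) (hS' : SameNbrCut G {w, z})
    (hne : ({x, y} : Finset V) ≠ {w, z}) : w ∉ ({x, y} : Finset V) := by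
  have hwz : w ≠ z := pair_ne hS'.1
  intro hw
  rcases Finset.mem_insert.mp hw with rfl | hw'
  · -- w = x
    have hzy : z ≠ y := by rintro rfl; exact hne rfl
    exact aux_common hG hS hS' (by simp [hwz.symm, hzy])
  · have hwy : w = y := by simpa using hw'
    subst hwy
    have hzx : z ≠ x := by
      rintro rfl
      exact hne (by rw [Finset.pair_comm])
    rw [Finset.pair_comm x w] at hS
    exact aux_common hG hS hS' (by simp [hwz.symm, hzx])

/-- Neighbours of a cut vertex are confined to the other cut, given non-reachability. -/
lemma nbr_sub {G : SimpleGraph V} {S : Finset V} {w z : V}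
    (hsame : ∀ a ∈ ({w, z} : Finset V), ∀ b ∈ ({w, z} : Finset V),
      ∀ v ∉ ({w, z} : Finset V), (G.Adj a v ↔ G.Adj b v))
    (hw : w ∈ ((↑S : Set V))ᶜ) (hz : z ∈ ((↑S : Set V))ᶜ)
    (hreach : ¬ (G.induce ((↑S : Set V))ᶜ).Reachable ⟨w, hw⟩ ⟨z, hz⟩) :
    ∀ v, G.Adj w v → v ∈ S := by
  intro v hv
  by_contra hvS
  have hvc : v ∈ ((↑S : Set V))ᶜ := by simpa using hvS
  have hvz : v ≠ z := by
    rintro rfl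
    exact hreach (Adj.reachable (by exact hv : (G.induce ((↑S : Set V))ᶜ).Adj ⟨w, hw⟩ ⟨v, hvc⟩))
  have hvw : v ≠ w := hv.ne'
  have hvS' : v ∉ ({w, z} : Finset V) := by simp [hvw, hvz]
  have hzv : G.Adj z v := (hsame w (by simp) z (by simp) v hvS').mp hv
  have e1 : (G.induce ((↑S : Set V))ᶜ).Adj ⟨w, hw⟩ ⟨v, hvc⟩ := hv
  have e2 : (G.induce ((↑S : Set V))ᶜ).Adj ⟨z, hz⟩ ⟨v, hvc⟩ := hzv
  exact hreach (e1.reachable.trans e2.reachable.symm)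

def quadMap (x w y z : V) : V → Fin 4 :=
  fun v => if v = x then 0 else if v = w then 1 else if v = y then 2 else 3


end Aux

set_option maxHeartbeats 1000000 in
/-- Lemma 1(b): if `G` is not a 4-cycle, the two vertices of a second
2-cut with the same neighbours lie in the same component of `G \ S`. -/
theorem sameNbrCut_sameComponent [DecidableEq V] (G : SimpleGraph V)
    (hG : G.Connected) (h4 : IsEmpty (G ≃g SimpleGraph.cycleGraph 4))
    (x y w z : V) (hS : SameNbrCut G {x, y}) (hS' : SameNbrCut G {w, z})
    (hne : ({x, y} : Finset V) ≠ {w, z}) :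
    ∃ (hw : w ∈ ((↑({x, y} : Finset V) : Set V))ᶜ)
      (hz : z ∈ ((↑({x, y} : Finset V) : Set V))ᶜ),
      (G.induce ((↑({x, y} : Finset V) : Set V))ᶜ).Reachable ⟨w, hw⟩ ⟨z, hz⟩ := by
  classical
  have hxy : x ≠ y := pair_ne hS.1
  have hwz : w ≠ z := pair_ne hS'.1
  -- swaps
  have hSs : SameNbrCut G {y, x} := by rwa [Finset.pair_comm] at hS
  have hS's : SameNbrCut G {z, w} := by rwa [Finset.pair_comm] at hS'
  -- disjointness
  have hwS : w ∉ ({x, y} : Finset V) := not_mem_of_cuts hG hS hS' hne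
  have hzS : z ∉ ({x, y} : Finset V) :=
    not_mem_of_cuts hG hS hS's (fun h => hne (h.trans (Finset.pair_comm z w)))
  have hxS' : x ∉ ({w, z} : Finset V) := not_mem_of_cuts hG hS' hS hne.symm
  have hyS' : y ∉ ({w, z} : Finset V) :=
    not_mem_of_cuts hG hS' hSs (fun h => hne (by rw [Finset.pair_comm x y]; exact h.symm))
  have hwx : w ≠ x := by simp at hwS; exact hwS.1
  have hwy : w ≠ y := by simp at hwS; exact hwS.2
  have hzx : z ≠ x := by simp at hzS; exact hzS.1
  have hzy : z ≠ y := by simp at hzS; exact hzS.2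
  have hwc : w ∈ ((↑({x, y} : Finset V) : Set V))ᶜ := by simpa using hwS
  have hzc : z ∈ ((↑({x, y} : Finset V) : Set V))ᶜ := by simpa using hzS
  have hxc : x ∈ ((↑({w, z} : Finset V) : Set V))ᶜ := by simpa using hxS'
  have hyc : y ∈ ((↑({w, z} : Finset V) : Set V))ᶜ := by simpa using hyS'
  refine ⟨hwc, hzc, ?_⟩
  by_contra hreach
  -- neighbours of w and z are confined to {x, y}
  have Nw : ∀ v, G.Adj w v → v ∈ ({x, y} : Finset V) := nbr_sub hS'.2.2 hwc hzc hreach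
  have Nz : ∀ v, G.Adj z v → v ∈ ({x, y} : Finset V) :=
    nbr_sub hS's.2.2 hzc hwc (fun h => hreach h.symm)
  -- G - S' is disconnected
  have hpre : ¬ (G.induce ((↑({w, z} : Finset V) : Set V))ᶜ).Preconnected := hS'.2.1
  rw [SimpleGraph.Preconnected] at hpre
  push_neg at hpre
  obtain ⟨a, b, hab⟩ := hpre
  obtain ⟨va, hva, hadja, hra⟩ :=
    attach hG (⟨w, by simp⟩ : ({w, z} : Finset V).Nonempty) hS'.2.2 a.2
  obtain ⟨vb, hvb, hadjb, hrb⟩ :=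
    attach hG (⟨w, by simp⟩ : ({w, z} : Finset V).Nonempty) hS'.2.2 b.2
  rw [Subtype.coe_eta] at hra hrb
  have hva2 : va = x ∨ va = y := by
    have := Nw va (hadja w (by simp)); simpa using this
  have hvb2 : vb = x ∨ vb = y := by
    have := Nw vb (hadjb w (by simp)); simpa using this
  have main : G.Adj w x ∧ G.Adj w y ∧ G.Adj z x ∧ G.Adj z y ∧
      ¬ (G.induce ((↑({w, z} : Finset V) : Set V))ᶜ).Reachable ⟨x, hxc⟩ ⟨y, hyc⟩ := by
    rcases hva2 with rfl | rfl <;> rcases hvb2 with rfl | rfl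
    · exact absurd (hra.trans hrb.symm) (by exact hab)
    · exact ⟨hadja w (by simp), hadjb w (by simp), hadja z (by simp), hadjb z (by simp),
        fun h => hab (hra.trans (h.trans hrb.symm))⟩
    · exact ⟨hadjb w (by simp), hadja w (by simp), hadjb z (by simp), hadja z (by simp),
        fun h => hab (hra.trans (h.symm.trans hrb.symm))⟩
    · exact absurd (hra.trans hrb.symm) (by exact hab)
  obtain ⟨hawx, hawy, hazx, hazy, hreach'⟩ := main
  -- neighbours of x and y are confined to {w, z}
  have Nx : ∀ v, G.Adj x v → v ∈ ({w, z} : Finset V) := nbr_sub hS.2.2 hxc hyc hreach'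
  have Ny : ∀ v, G.Adj y v → v ∈ ({w, z} : Finset V) :=
    nbr_sub hSs.2.2 hyc hxc (fun h => hreach' h.symm)
  -- non-adjacencies
  have hnwz : ¬ G.Adj w z := fun h =>
    hreach (SimpleGraph.Adj.reachable (by exact h : (G.induce ((↑({x, y} : Finset V) : Set V))ᶜ).Adj ⟨w, hwc⟩ ⟨z, hzc⟩))
  have hnxy : ¬ G.Adj x y := fun h =>
    hreach' (SimpleGraph.Adj.reachable (by exact h : (G.induce ((↑({w, z} : Finset V) : Set V))ᶜ).Adj ⟨x, hxc⟩ ⟨y, hyc⟩))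
  -- the whole graph is {x, y, w, z}
  have hK : ∀ a ∈ ({x, y, w, z} : Set V), ∀ b, G.Adj a b → b ∈ ({x, y, w, z} : Set V) := by
    intro c hc d hd
    simp only [Set.mem_insert_iff, Set.mem_singleton_iff] at hc ⊢
    rcases hc with rfl | rfl | rfl | rfl
    · exact Or.inr (Or.inr (by simpa using Nx d hd))
    · exact Or.inr (Or.inr (by simpa using Ny d hd))
    · exact Or.imp id Or.inl (by simpa using Nw d hd)
    · exact Or.imp id Or.inl (by simpa using Nz d hd)
  have all_mem : ∀ u, u ∈ ({x, y, w, z} : Set V) := by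
    intro u
    obtain ⟨p⟩ := hG.preconnected x u
    exact walk_closed hK p (by simp)
  -- build the isomorphism to C4
  have hfx : quadMap x w y z x = 0 := by simp [quadMap]
  have hfw : quadMap x w y z w = 1 := by simp [quadMap, hwx]
  have hfy : quadMap x w y z y = 2 := by simp [quadMap, hxy.symm, hwy.symm]
  have hfz : quadMap x w y z z = 3 := by simp [quadMap, hzx, hwz.symm, hzy]
  have linv : Function.LeftInverse ![x, w, y, z] (quadMap x w y z) := by
    intro v
    have := all_mem v
    simp only [Set.mem_insert_iff, Set.mem_singleton_iff] at this
    rcases this with rfl | rfl | rfl | rfl <;>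
      simp only [hfx, hfw, hfy, hfz] <;> rfl
  have rinv : Function.RightInverse ![x, w, y, z] (quadMap x w y z) := by
    intro i
    fin_cases i
    · simpa using hfx
    · simpa using hfw
    · simpa using hfy
    · simpa using hfz
  refine h4.false ⟨⟨quadMap x w y z, ![x, w, y, z], linv, rinv⟩, @fun a b => ?_⟩
  have ha := all_mem a
  have hb := all_mem b
  simp only [Set.mem_insert_iff, Set.mem_singleton_iff] at ha hb
  simp only [Equiv.coe_fn_mk]
  rcases ha with rfl | rfl | rfl | rfl <;> rcases hb with rfl | rfl | rfl | rfl <;>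
    simp only [hfx, hfw, hfy, hfz] <;>
    first
      | exact iff_of_true (by decide)
          (by first | exact hawx | exact hawx.symm | exact hawy | exact hawy.symm
                    | exact hazx | exact hazx.symm | exact hazy | exact hazy.symm)
      | exact iff_of_false (by decide)
          (by intro h; first | exact hnxy h | exact hnxy h.symm | exact hnwz h
                             | exact hnwz h.symm | exact G.loopless.irrefl _ h)
end

section
/- Let G be a connected graph, S = {x,y} a 2-cut with the same neighbours, G_1,…,G_c the connected components of G\S, and T_S the set of tuples (k_1,…,k_c) of nonnegative integers with k_i ≤ |V(G_i)| and Σk_i = k−1. For any α ⊆ T_S, the map φ_{S,α} which sends A to A^S if the component-distribution tuple of A\S lies in α (and |A ∩ S| = 1), and fixes A otherwise, is an automorphism of F_k(G). -/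
open scoped Classical symmDiff

variable {V : Type*}

section AuxLemmas

variable [Fintype V] [DecidableEq V]

lemma tokenMove_eq_symmDiff (A S : Finset V) : tokenMove A S = A ∆ S := by
  rw [symmDiff_def, Finset.sup_eq_union]; rfl

lemma compDist_congr (G : SimpleGraph V) (S : Finset V) {A B : Finset V}
    (h : ∀ v ∉ S, (v ∈ A ↔ v ∈ B)) : compDist G S A = compDist G S B := by
  funext c
  unfold compDist
  congr 1
  ext v
  have hv : (v : V) ∉ S := by
    have hv2 := v.2
    rwa [Set.mem_compl_iff, Finset.mem_coe] at hv2
  simp only [Set.mem_setOf_eq, h (v : V) hv]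

lemma compDist_symmDiff (G : SimpleGraph V) (S : Finset V) (A : Finset V) :
    compDist G S (A ∆ S) = compDist G S A := by
  apply compDist_congr
  intro v hv
  simp [Finset.mem_symmDiff, hv]

lemma compDist_swap (G : SimpleGraph V) (S : Finset V) {A : Finset V} {a b : V}
    (ha : a ∉ S) (hb : b ∉ S) (haA : a ∈ A) (hbA : b ∉ A)
    (hcomp : (G.induce ((↑S : Set V)ᶜ)).connectedComponentMk ⟨a, by simpa using ha⟩ =
      (G.induce ((↑S : Set V)ᶜ)).connectedComponentMk ⟨b, by simpa using hb⟩) :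
    compDist G S (A ∆ {a, b}) = compDist G S A := by
  have ha' : a ∈ ((↑S : Set V)ᶜ : Set V) := by simpa using ha
  have hb' : b ∈ ((↑S : Set V)ᶜ : Set V) := by simpa using hb
  funext c
  unfold compDist
  set G' := G.induce ((↑S : Set V)ᶜ) with hG'
  by_cases hc : G'.connectedComponentMk ⟨a, ha'⟩ = c
  · have hset : {v : ((↑S : Set V)ᶜ : Set V) | (v : V) ∈ A ∆ {a, b} ∧
        G'.connectedComponentMk v = c}
        = insert ⟨b, hb'⟩ ({v : ((↑S : Set V)ᶜ : Set V) | (v : V) ∈ A ∧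
            G'.connectedComponentMk v = c} \ {⟨a, ha'⟩}) := by
      ext v
      simp only [Set.mem_setOf_eq, Set.mem_insert_iff, Set.mem_diff, Set.mem_singleton_iff,
        Finset.mem_symmDiff, Finset.mem_insert, Finset.mem_singleton]
      constructor
      · rintro ⟨h1 | h2, hvc⟩
        · refine Or.inr ⟨⟨h1.1, hvc⟩, ?_⟩
          rintro rfl
          exact h1.2 (Or.inl rfl)
        · rcases h2.1 with hva | hvb
          · exact absurd (hva ▸ h2.2) (by simp [haA])
          · exact Or.inl (Subtype.ext hvb)
      · rintro (rfl | ⟨⟨hvA, hvc⟩, hvne⟩)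
        · exact ⟨Or.inr ⟨Or.inr rfl, hbA⟩, by rw [← hcomp, hc]⟩
        · refine ⟨Or.inl ⟨hvA, ?_⟩, hvc⟩
          rintro (hva | hvb)
          · exact hvne (Subtype.ext hva)
          · exact hbA (hvb ▸ hvA)
    rw [hset, Set.ncard_exchange]
    · simp only [Set.mem_setOf_eq, not_and]
      intro h
      exact absurd h hbA
    · exact ⟨haA, hc⟩
  · congr 1
    ext v
    simp only [Set.mem_setOf_eq, Finset.mem_symmDiff, Finset.mem_insert, Finset.mem_singleton]
    constructor
    · rintro ⟨h1 | h2, hvc⟩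
      · exact ⟨h1.1, hvc⟩
      · exfalso
        rcases h2.1 with hva | hvb
        · exact hc (by rw [show (⟨a, ha'⟩ : ((↑S : Set V)ᶜ : Set V)) = v from (Subtype.ext hva).symm, hvc])
        · apply hc
          rw [hcomp, show (⟨b, hb'⟩ : ((↑S : Set V)ᶜ : Set V)) = v from (Subtype.ext hvb).symm, hvc]
    · rintro ⟨hvA, hvc⟩
      refine ⟨Or.inl ⟨hvA, ?_⟩, hvc⟩
      rintro (hva | hvb)
      · exact hc (by rw [show (⟨a, ha'⟩ : ((↑S : Set V)ᶜ : Set V)) = v from (Subtype.ext hva).symm, hvc])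
      · exact hbA (hvb ▸ hvA)

lemma finsum_compDist (G : SimpleGraph V) (S : Finset V) (A : Finset V) :
    ∑ᶠ c, compDist G S A c = (A \ S).card := by
  haveI : Fintype (delComp G S) := Fintype.ofFinite _
  rw [finsum_eq_sum_of_fintype]
  set G' := G.induce ((↑S : Set V)ᶜ) with hG'
  set P : Finset ((↑S : Set V)ᶜ : Set V) :=
    Finset.univ.filter (fun v => (v : V) ∈ A) with hP
  have hterm : ∀ c, compDist G S A c =
      (P.filter (fun v => G'.connectedComponentMk v = c)).card := by
    intro c
    unfold compDist
    have : {v : ((↑S : Set V)ᶜ : Set V) | (v : V) ∈ A ∧ G'.connectedComponentMk v = c}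
        = ↑(P.filter (fun v => G'.connectedComponentMk v = c)) := by
      ext v
      simp [hP]
    rw [this, Set.ncard_coe_finset]
  have hsum := Finset.card_eq_sum_card_fiberwise
    (f := fun v => G'.connectedComponentMk v) (s := P) (t := Finset.univ)
    (fun v _ => Finset.mem_univ _)
  rw [Finset.sum_congr rfl (fun c _ => hterm c), ← hsum]
  refine Finset.card_bij (fun (v : ((↑S : Set V)ᶜ : Set V)) _ => (v : V)) ?_ ?_ ?_
  · intro v hv
    have hv1 : (v : V) ∈ A := by simpa [hP] using hv
    have hv2 : (v : V) ∉ S := by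
      have h2 := v.2
      rwa [Set.mem_compl_iff, Finset.mem_coe] at h2
    exact Finset.mem_sdiff.2 ⟨hv1, hv2⟩
  · intro v₁ _ v₂ _ h
    exact Subtype.ext h
  · intro w hw
    rw [Finset.mem_sdiff] at hw
    exact ⟨⟨w, by simpa using hw.2⟩, by simpa [hP] using hw.1, rfl⟩

lemma card_inter_of_mem (G : SimpleGraph V) (S : Finset V) (k : ℕ) (hk1 : 1 ≤ k)
    (α : Set (delComp G S → ℕ)) (hα : α ⊆ TS G S k) {A : Finset V}
    (hA : A.card = k) (h : compDist G S A ∈ α) : (A ∩ S).card = 1 := by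
  have hsum := (hα h).2
  rw [finsum_compDist] at hsum
  have h1 : (A \ S).card + (A ∩ S).card = k := by
    rw [Finset.card_sdiff_add_card_inter, hA]
  omega

lemma card_phi (G : SimpleGraph V) (S : Finset V) (hS : SameNbrCut G S) (k : ℕ)
    (hk1 : 1 ≤ k) (α : Set (delComp G S → ℕ)) (hα : α ⊆ TS G S k)
    {A : Finset V} (hA : A.card = k) : (phiFun G S α A).card = k := by
  rw [phiFun]
  split_ifs with h
  · have hi := card_inter_of_mem G S k hk1 α hα hA h
    have h1 : (A \ S).card + (A ∩ S).card = k := by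
      rw [Finset.card_sdiff_add_card_inter, hA]
    have h2 : (S \ A).card + (S ∩ A).card = 2 := by
      rw [Finset.card_sdiff_add_card_inter, hS.1]
    have h3 : (S ∩ A).card = (A ∩ S).card := by rw [Finset.inter_comm]
    have h4 : (tokenMove A S).card = (A \ S).card + (S \ A).card := by
      rw [tokenMove, Finset.card_union_of_disjoint disjoint_sdiff_sdiff]
    omega
  · exact hA

lemma phi_invol (G : SimpleGraph V) (S : Finset V) (α : Set (delComp G S → ℕ))
    (A : Finset V) : phiFun G S α (phiFun G S α A) = A := by
  by_cases h : compDist G S A ∈ α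
  · simp only [phiFun]
    simp only [if_pos h, tokenMove_eq_symmDiff]
    rw [if_pos (show compDist G S (A ∆ S) ∈ α by rw [compDist_symmDiff]; exact h),
      symmDiff_symmDiff_cancel_right]
  · simp only [phiFun]
    simp only [if_neg h]

lemma split_of_symmDiff_pair {A B : Finset V} {a b : V} (hA : A.card = B.card)
    (hd : A ∆ B = {a, b}) (hne : a ≠ b) :
    (a ∈ A ∧ a ∉ B ∧ b ∈ B ∧ b ∉ A) ∨ (a ∈ B ∧ a ∉ A ∧ b ∈ A ∧ b ∉ B) := by
  have haAB : a ∈ A ∆ B := by rw [hd]; simp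
  have hbAB : b ∈ A ∆ B := by rw [hd]; simp
  rw [Finset.mem_symmDiff] at haAB hbAB
  have key : ∀ C D : Finset V, C.card = D.card → C ∆ D = {a, b} →
      a ∈ C → a ∉ D → b ∈ C → b ∉ D → False := by
    intro C D hcd hCD haC haD hbC hbD
    have hsub : D ⊆ C := by
      intro x hx
      by_contra hxC
      have : x ∈ C ∆ D := Finset.mem_symmDiff.2 (Or.inr ⟨hx, hxC⟩)
      rw [hCD, Finset.mem_insert, Finset.mem_singleton] at this
      rcases this with rfl | rfl
      · exact haD hx
      · exact hbD hx
    have : D = C := Finset.eq_of_subset_of_card_le hsub (le_of_eq hcd)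
    rw [this, symmDiff_self] at hCD
    exact Finset.insert_ne_empty a {b} hCD.symm
  rcases haAB with ⟨haA, haB⟩ | ⟨haB, haA⟩ <;> rcases hbAB with ⟨hbA, hbB⟩ | ⟨hbB, hbA⟩
  · exact absurd (key A B hA hd haA haB hbA hbB) not_false
  · exact Or.inl ⟨haA, haB, hbB, hbA⟩
  · exact Or.inr ⟨haB, haA, hbA, hbB⟩
  · exact absurd (key B A hA.symm (by rwa [symmDiff_comm]) haB haA hbB hbA) not_false

lemma pair_symmDiff_S (S : Finset V) (hScard : S.card = 2) {a b : V}
    (haS : a ∈ S) (hbS : b ∉ S) (hab : a ≠ b) :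
    ∃ x ∈ S, x ≠ a ∧ ({a, b} : Finset V) ∆ S = {x, b} := by
  obtain ⟨u, v, huv, hSuv⟩ := Finset.card_eq_two.1 hScard
  have hax : ∃ x, x ≠ a ∧ S = {a, x} := by
    rw [hSuv] at haS
    rcases Finset.mem_insert.1 haS with rfl | h
    · exact ⟨v, huv.symm, hSuv⟩
    · rw [Finset.mem_singleton] at h
      subst h
      exact ⟨u, huv, by rw [hSuv, Finset.pair_comm]⟩
  obtain ⟨x, hxa, hSx⟩ := hax
  have hxS : x ∈ S := by rw [hSx]; simp
  have hbx : b ≠ x := fun h => hbS (h ▸ hxS)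
  refine ⟨x, hxS, hxa, ?_⟩
  rw [hSx]
  ext w
  simp only [Finset.mem_symmDiff, Finset.mem_insert, Finset.mem_singleton]
  constructor
  · rintro (⟨rfl | rfl, h2⟩ | ⟨rfl | rfl, h2⟩)
    · exact absurd (Or.inl rfl) h2
    · exact Or.inr rfl
    · exact absurd (Or.inl rfl) h2
    · exact Or.inl rfl
  · rintro (rfl | rfl)
    · exact Or.inr ⟨Or.inr rfl, by rintro (rfl | rfl); exacts [hxa rfl, hbx rfl]⟩
    · exact Or.inl ⟨Or.inr rfl, by rintro (rfl | rfl); exacts [hab rfl, hbx rfl]⟩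

lemma mixed_case (G : SimpleGraph V) (S : Finset V) (hS : SameNbrCut G S)
    {A B : Finset V} (hAB : A.card = B.card)
    (hne : compDist G S A ≠ compDist G S B)
    {a b : V} (hab : G.Adj a b) (hd : A ∆ B = {a, b}) :
    ∃ a' b', G.Adj a' b' ∧ (A ∆ B) ∆ S = {a', b'} := by
  have hBA : B = A ∆ {a, b} := by rw [← hd, symmDiff_symmDiff_cancel_left]
  have hne_ab : a ≠ b := hab.ne
  by_cases haS : a ∈ S <;> by_cases hbS : b ∈ S
  · -- both in S : {a,b} = S, contradiction
    exfalso
    have hsub : ({a, b} : Finset V) ⊆ S := by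
      intro w hw
      rw [Finset.mem_insert, Finset.mem_singleton] at hw
      rcases hw with rfl | rfl <;> assumption
    have hcard : ({a, b} : Finset V).card = 2 := Finset.card_pair hne_ab
    have heq : ({a, b} : Finset V) = S :=
      Finset.eq_of_subset_of_card_le hsub (by rw [hS.1, hcard])
    apply hne
    rw [hBA, heq, compDist_symmDiff]
  · -- a ∈ S, b ∉ S
    obtain ⟨x, hxS, _, hpair⟩ := pair_symmDiff_S S hS.1 haS hbS hne_ab
    refine ⟨x, b, ?_, by rw [hd, hpair]⟩
    exact (hS.2.2 a haS x hxS b hbS).1 hab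
  · -- b ∈ S, a ∉ S
    obtain ⟨x, hxS, _, hpair⟩ := pair_symmDiff_S S hS.1 hbS haS hne_ab.symm
    refine ⟨x, a, ?_, by rw [hd, Finset.pair_comm, hpair]⟩
    exact (hS.2.2 b hbS x hxS a haS).1 hab.symm
  · -- both outside S : same component, contradiction
    exfalso
    have ha' : a ∈ ((↑S : Set V)ᶜ : Set V) := by simpa using haS
    have hb' : b ∈ ((↑S : Set V)ᶜ : Set V) := by simpa using hbS
    have hadj : (G.induce ((↑S : Set V)ᶜ)).Adj ⟨a, ha'⟩ ⟨b, hb'⟩ := hab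
    have hcomp : (G.induce ((↑S : Set V)ᶜ)).connectedComponentMk ⟨a, ha'⟩ =
        (G.induce ((↑S : Set V)ᶜ)).connectedComponentMk ⟨b, hb'⟩ :=
      SimpleGraph.ConnectedComponent.sound hadj.reachable
    rcases split_of_symmDiff_pair hAB hd hne_ab with ⟨haA, _, _, hbA⟩ | ⟨_, haA, hbA, _⟩
    · apply hne
      rw [hBA, compDist_swap G S haS hbS haA hbA hcomp]
    · apply hne
      rw [hBA, Finset.pair_comm,
        compDist_swap G S hbS haS hbA haA hcomp.symm]

lemma phi_adj (G : SimpleGraph V) (S : Finset V) (hS : SameNbrCut G S) (k : ℕ)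
    (hk1 : 1 ≤ k) (α : Set (delComp G S → ℕ)) (hα : α ⊆ TS G S k)
    {A B : Finset V} (hA : A.card = k) (hB : B.card = k)
    {a b : V} (hab : G.Adj a b) (hd : A ∆ B = {a, b}) :
    ∃ a' b', G.Adj a' b' ∧ (phiFun G S α A) ∆ (phiFun G S α B) = {a', b'} := by
  have hAB : A.card = B.card := by rw [hA, hB]
  by_cases hA' : compDist G S A ∈ α <;> by_cases hB' : compDist G S B ∈ α
  · refine ⟨a, b, hab, ?_⟩
    rw [phiFun, if_pos hA', phiFun, if_pos hB', tokenMove_eq_symmDiff,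
      tokenMove_eq_symmDiff, symmDiff_symmDiff_symmDiff_comm, symmDiff_self,
      symmDiff_bot, hd]
  · have hne : compDist G S A ≠ compDist G S B := fun h => hB' (h ▸ hA')
    obtain ⟨a', b', hab', hd'⟩ := mixed_case G S hS hAB hne hab hd
    refine ⟨a', b', hab', ?_⟩
    rw [phiFun, if_pos hA', phiFun, if_neg hB', tokenMove_eq_symmDiff,
      symmDiff_assoc, symmDiff_comm S B, ← symmDiff_assoc]
    exact hd'
  · have hne : compDist G S A ≠ compDist G S B := fun h => hA' (h ▸ hB')
    obtain ⟨a', b', hab', hd'⟩ := mixed_case G S hS hAB hne hab hd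
    refine ⟨a', b', hab', ?_⟩
    rw [phiFun, if_neg hA', phiFun, if_pos hB', tokenMove_eq_symmDiff,
      ← symmDiff_assoc]
    exact hd'
  · exact ⟨a, b, hab, by rw [phiFun, if_neg hA', phiFun, if_neg hB']; exact hd⟩

end AuxLemmas

/-- Proposition 1, first part: `φ_{S,α}` is an automorphism of `F_k(G)`. -/
theorem phi_is_automorphism [Fintype V] [DecidableEq V] (G : SimpleGraph V)
    (hG : G.Connected) (S : Finset V) (hS : SameNbrCut G S) (k : ℕ)
    (hk1 : 1 ≤ k) (hk2 : k ≤ Fintype.card V - 1)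
    (α : Set (delComp G S → ℕ)) (hα : α ⊆ TS G S k) :
    ∃ e : tokenGraph G k ≃g tokenGraph G k,
      ∀ A : {A : Finset V // A.card = k},
        ((e A : {B : Finset V // B.card = k}) : Finset V) = phiFun G S α (↑A : Finset V) := by
  set f : {A : Finset V // A.card = k} → {A : Finset V // A.card = k} :=
    fun A => ⟨phiFun G S α A.1, card_phi G S hS k hk1 α hα A.2⟩ with hf
  have hinv : Function.Involutive f := by
    intro A
    apply Subtype.ext
    simpa [hf] using phi_invol G S α A.1
  have hfwd : ∀ A B : {A : Finset V // A.card = k},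
      (tokenGraph G k).Adj A B → (tokenGraph G k).Adj (f A) (f B) := by
    rintro A B ⟨a, b, hab, hd⟩
    obtain ⟨a', b', hab', hd'⟩ := phi_adj G S hS k hk1 α hα A.2 B.2 hab hd
    exact ⟨a', b', hab', hd'⟩
  refine ⟨⟨hinv.toPerm, ?_⟩, fun A => rfl⟩
  intro A B
  constructor
  · intro h
    have h2 := hfwd (f A) (f B) h
    rwa [hinv A, hinv B] at h2
  · exact hfwd A B
end

section
/- With notation as above, for any α, β ⊆ T_S one has φ_{S,α} ∘ φ_{S,β} = φ_{S, α △ β}, where △ denotes symmetric difference. -/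
open scoped Classical symmDiff

variable {V : Type*}

lemma compDist_tokenMove [DecidableEq V] (G : SimpleGraph V) (S A : Finset V) :
    compDist G S (tokenMove A S) = compDist G S A := by
  funext c
  unfold compDist tokenMove
  congr 1
  ext v
  have hv : (v : V) ∉ S := v.2
  simp [Finset.mem_union, Finset.mem_sdiff, hv]

lemma tokenMove_tokenMove [DecidableEq V] (A S : Finset V) :
    tokenMove (tokenMove A S) S = A := by
  ext v
  by_cases hv : v ∈ S <;> simp [tokenMove, hv]

/-- `φ_{S,α} ∘ φ_{S,β} = φ_{S, α △ β}`. -/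
theorem phi_comp_symmDiff [Fintype V] [DecidableEq V] (G : SimpleGraph V)
    (hG : G.Connected) (S : Finset V) (hS : SameNbrCut G S) (k : ℕ)
    (hk1 : 1 ≤ k) (hk2 : k ≤ Fintype.card V - 1)
    (α β : Set (delComp G S → ℕ)) (hα : α ⊆ TS G S k) (hβ : β ⊆ TS G S k) :
    ∀ A : Finset V, A.card = k →
      phiFun G S α (phiFun G S β A) = phiFun G S (α ∆ β) A := by
  intro A hA
  unfold phiFun
  by_cases hb : compDist G S A ∈ β
  · rw [if_pos hb, compDist_tokenMove]
    by_cases ha : compDist G S A ∈ α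
    · rw [if_pos ha, if_neg, tokenMove_tokenMove]
      simp [Set.mem_symmDiff, ha, hb]
    · rw [if_neg ha, if_pos]
      simp [Set.mem_symmDiff, ha, hb]
  · rw [if_neg hb]
    by_cases ha : compDist G S A ∈ α
    · rw [if_pos ha, if_pos]
      simp [Set.mem_symmDiff, ha, hb]
    · rw [if_neg ha, if_neg]
      simp [Set.mem_symmDiff, ha, hb]
end

section
/- Let G be a connected graph on n = 2k vertices with a 2-cut with the same neighbours S, and let α ⊆ T_S with α ≠ ∅ and α ≠ T_S. Then φ_{S,α} is not of the form 𝔠 ∘ ι(f) for any automorphism f of G, where 𝔠 is the complement automorphism. -/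
open scoped Classical symmDiff

variable {V : Type*}

lemma exists_real [Fintype V] [DecidableEq V] (G : SimpleGraph V) (S : Finset V)
    (t : delComp G S → ℕ) (ht : ∀ c, t c ≤ c.supp.ncard) :
    ∃ D : Finset V, (∀ v ∈ D, v ∉ S) ∧ D.card = ∑ᶠ c, t c ∧
      ∀ x ∈ S, compDist G S (insert x D) = t := by
  classical
  haveI : Fintype (delComp G S) := Fintype.ofFinite _
  have hch : ∀ c : delComp G S, ∃ E ⊆ c.supp.toFinset, E.card = t c := by
    intro c
    exact Finset.exists_subset_card_eq (by
      rw [← Set.ncard_eq_toFinset_card']; exact ht c)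
  choose Dc hsub hcard using hch
  have hmk : ∀ c, ∀ v ∈ Dc c,
      (G.induce ((↑S : Set V)ᶜ)).connectedComponentMk v = c := by
    intro c v hv
    have := hsub c hv
    rw [Set.mem_toFinset] at this
    exact this
  set E : Finset ((↑S : Set V)ᶜ : Set V) := Finset.univ.biUnion Dc with hE
  refine ⟨E.image Subtype.val, ?_, ?_, ?_⟩
  · intro v hv
    simp only [Finset.mem_image] at hv
    obtain ⟨w, -, rfl⟩ := hv
    exact w.2
  · rw [Finset.card_image_of_injective _ Subtype.val_injective, hE,
      Finset.card_biUnion, finsum_eq_sum_of_fintype]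
    · exact Finset.sum_congr rfl fun c _ => hcard c
    · intro c₁ _ c₂ _ hne
      refine Finset.disjoint_left.mpr fun v h1 h2 => hne ?_
      rw [← hmk c₁ v h1, hmk c₂ v h2]
  · intro x hx
    funext c
    unfold compDist
    have hset : {v : ((↑S : Set V)ᶜ : Set V) | (v : V) ∈ insert x (E.image Subtype.val) ∧
        (G.induce ((↑S : Set V)ᶜ)).connectedComponentMk v = c} = ↑(Dc c) := by
      ext v
      have hvx : (v : V) ≠ x := fun h => v.2 (h ▸ hx)
      simp only [Set.mem_setOf_eq, Finset.mem_insert, Finset.mem_image, hvx, false_or,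
        Finset.coe_sort_coe, Finset.mem_coe]
      constructor
      · rintro ⟨⟨w, hw, hwv⟩, hc⟩
        have hwv' : w = v := Subtype.ext hwv
        rw [hE, Finset.mem_biUnion] at hw
        obtain ⟨c', -, hc'⟩ := hw
        have h1 := hmk c' w hc'
        rw [hwv'] at hc' h1
        rw [h1] at hc
        rwa [hc] at hc'
      · intro hv
        have hvE : v ∈ E := by
          rw [hE, Finset.mem_biUnion]; exact ⟨c, Finset.mem_univ _, hv⟩
        exact ⟨⟨v, hvE, rfl⟩, hmk c v hv⟩
    rw [hset, Set.ncard_coe_finset, hcard]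


theorem phi_aux_main [Fintype V] [DecidableEq V] (G : SimpleGraph V)
    (hG : G.Connected) (S : Finset V) (hS : SameNbrCut G S) (k : ℕ)
    (hk1 : 1 ≤ k) (hn : Fintype.card V = 2 * k)
    (α : Set (delComp G S → ℕ)) (hα : α ⊆ TS G S k)
    (hne : α ≠ ∅) (hnT : α ≠ TS G S k) :
    ¬ ∃ f : G ≃g G, ∀ A : Finset V, A.card = k →
        phiFun G S α A = (Finset.image f A)ᶜ := by
  classical
  rintro ⟨f, h⟩
  obtain ⟨x, y, hxy, hSxy⟩ := Finset.card_eq_two.mp hS.1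
  have hxS : x ∈ S := by rw [hSxy]; simp
  have hyS : y ∈ S := by rw [hSxy]; simp
  obtain ⟨t, htα⟩ := Set.nonempty_iff_ne_empty.mpr hne
  have htT : t ∈ TS G S k := hα htα
  obtain ⟨t', ht'T, ht'α⟩ : ∃ t' ∈ TS G S k, t' ∉ α :=
    Set.exists_of_ssubset (hα.ssubset_of_ne hnT)
  obtain ⟨D, hDS, hDcard, hDdist⟩ := exists_real G S t htT.1
  obtain ⟨C, hCS, hCcard, hCdist⟩ := exists_real G S t' ht'T.1
  rw [htT.2] at hDcard
  rw [ht'T.2] at hCcard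
  have hxC : x ∉ C := fun h' => hCS x h' hxS
  have hyC : y ∉ C := fun h' => hCS y h' hyS
  have hxD : x ∉ D := fun h' => hDS x h' hxS
  have hyD : y ∉ D := fun h' => hDS y h' hyS
  have hkk : k - 1 + 1 = k := Nat.sub_add_cancel hk1
  have hcardA0 : (insert x C).card = k := by
    rw [Finset.card_insert_of_notMem hxC, hCcard, hkk]
  have hcardA1 : (insert y C).card = k := by
    rw [Finset.card_insert_of_notMem hyC, hCcard, hkk]
  have hcardB0 : (insert x D).card = k := by
    rw [Finset.card_insert_of_notMem hxD, hDcard, hkk]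
  have finj : Function.Injective (f : V → V) := f.toEquiv.injective
  -- equations
  have h1 : Finset.image f (insert x C) = (insert x C)ᶜ := by
    have := h (insert x C) hcardA0
    rw [phiFun, hCdist x hxS, if_neg ht'α] at this
    exact eq_compl_comm.mp this
  have h2 : Finset.image f (insert y C) = (insert y C)ᶜ := by
    have := h (insert y C) hcardA1
    rw [phiFun, hCdist y hyS, if_neg ht'α] at this
    exact eq_compl_comm.mp this
  have htm : tokenMove (insert x D) S = insert y D := by
    unfold tokenMove
    ext v
    by_cases hvD : v ∈ D
    · have := hDS v hvD
      rw [hSxy] at this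
      simp only [Finset.mem_insert, Finset.mem_singleton, not_or] at this
      simp [hSxy, hvD, this.1, this.2]
    · by_cases hvx : v = x
      · subst hvx; simp [hSxy, hvD, hxy]
      · by_cases hvy : v = y
        · subst hvy; simp [hSxy, hvD, Ne.symm hxy]
        · simp [hSxy, hvD, hvx, hvy]
  have h3 : Finset.image f (insert x D) = (insert y D)ᶜ := by
    have := h (insert x D) hcardB0
    rw [phiFun, hDdist x hxS, if_pos htα, htm] at this
    exact eq_compl_comm.mp this
  -- f x ∉ insert x C
  have hfx1 : f x ∉ insert x C := by
    rw [← Finset.mem_compl, ← h1]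
    exact Finset.mem_image_of_mem _ (Finset.mem_insert_self x C)
  -- f x ∈ insert y C
  have hfx2 : (f : V → V) x ∈ insert y C := by
    by_contra hcon
    rw [← Finset.mem_compl, ← h2, Finset.mem_image] at hcon
    obtain ⟨a, ha, hfa⟩ := hcon
    have : a = x := finj hfa
    subst this
    simp only [Finset.mem_insert] at ha
    rcases ha with h' | h'
    · exact hxy h'
    · exact hxC h'
  have hfxy : (f : V → V) x = y := by
    rcases Finset.mem_insert.mp hfx2 with h' | h'
    · exact h'
    · exact absurd (Finset.mem_insert_of_mem h') hfx1
  -- but f x ∈ image f (insert x D) = (insert y D)ᶜ, so f x ≠ y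
  have hfx3 : (f : V → V) x ∈ (insert y D)ᶜ := by
    rw [← h3]
    exact Finset.mem_image_of_mem _ (Finset.mem_insert_self x D)
  rw [Finset.mem_compl] at hfx3
  exact hfx3 (hfxy ▸ Finset.mem_insert_self y D)

/-- Proposition 1, second part, `n = 2k` case: for `∅ ≠ α ≠ T_S`,
`φ_{S,α}` is not `𝔠 ∘ ι(f)` for any automorphism `f` of `G`. -/
theorem phi_not_complement_iota [Fintype V] [DecidableEq V] (G : SimpleGraph V)
    (hG : G.Connected) (S : Finset V) (hS : SameNbrCut G S) (k : ℕ)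
    (hk1 : 1 ≤ k) (hn : Fintype.card V = 2 * k)
    (α : Set (delComp G S → ℕ)) (hα : α ⊆ TS G S k)
    (hne : α ≠ ∅) (hnT : α ≠ TS G S k) :
    ¬ ∃ f : G ≃g G, ∀ A : Finset V, A.card = k →
        phiFun G S α A = (Finset.image f A)ᶜ := by
  exact phi_aux_main G hG S hS k hk1 hn α hα hne hnT
end

section
/- Let G be a connected graph, S a 2-cut with the same neighbours. Then φ_{S,T_S} equals ι(τ), where τ is the automorphism of G swapping the two vertices of S and fixing all other vertices. In particular φ_{S,T_S} is an induced automorphism of F_k(G). -/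
open scoped Classical symmDiff

variable {V : Type*}

lemma mem_image_swap [DecidableEq V] (x y v : V) (A : Finset V) :
    v ∈ A.image (Equiv.swap x y) ↔ Equiv.swap x y v ∈ A := by
  rw [Finset.mem_image]
  constructor
  · rintro ⟨a, ha, rfl⟩; rwa [Equiv.swap_apply_self]
  · intro h; exact ⟨_, h, Equiv.swap_apply_self x y v⟩

lemma compDist_le [Fintype V] (G : SimpleGraph V) (S A : Finset V) (c : delComp G S) :
    compDist G S A c ≤ c.supp.ncard := by
  apply Set.ncard_le_ncard _ (Set.toFinite _)
  intro v hv
  rw [SimpleGraph.ConnectedComponent.mem_supp_iff]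
  exact hv.2

lemma sum_compDist [Fintype V] [DecidableEq V] (G : SimpleGraph V) (S A : Finset V) :
    ∑ᶠ c, compDist G S A c = (A \ S).card := by
  classical
  have hfin : Finite (delComp G S) :=
    Quotient.finite ((G.induce ((↑S : Set V)ᶜ)).reachableSetoid)
  haveI : Fintype (delComp G S) := Fintype.ofFinite _
  rw [finsum_eq_sum_of_fintype]
  have h1 : ∀ c : delComp G S, compDist G S A c =
      (Finset.univ.filter (fun v : ((↑S : Set V)ᶜ : Set V) => (v : V) ∈ A ∧
        (G.induce ((↑S : Set V)ᶜ)).connectedComponentMk v = c)).card := by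
    intro c
    rw [compDist, Set.ncard_eq_toFinset_card', Set.toFinset_setOf]
  simp only [h1]
  have h2 : ∀ c : delComp G S,
      (Finset.univ.filter (fun v : ((↑S : Set V)ᶜ : Set V) => (v : V) ∈ A ∧
        (G.induce ((↑S : Set V)ᶜ)).connectedComponentMk v = c)) =
      ((Finset.univ.filter (fun v : ((↑S : Set V)ᶜ : Set V) => (v : V) ∈ A)).filter
        (fun v => (G.induce ((↑S : Set V)ᶜ)).connectedComponentMk v = c)) := by
    intro c; rw [Finset.filter_filter]
  simp only [h2]
  have h3 : (Finset.univ.filter (fun v : ((↑S : Set V)ᶜ : Set V) => (v : V) ∈ A)).card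
      = (A \ S).card := by
    refine Finset.card_bij (fun v _ => (v : V)) ?_ ?_ ?_
    · intro v hv
      simp only [Finset.mem_filter, Finset.mem_univ, true_and] at hv
      rw [Finset.mem_sdiff]
      exact ⟨hv, fun h => v.2 (Finset.mem_coe.mpr h)⟩
    · intro a _ b _ h; exact Subtype.ext h
    · intro a ha
      rw [Finset.mem_sdiff] at ha
      exact ⟨⟨a, by simpa using ha.2⟩, by simp [ha.1], rfl⟩
  rw [← h3]
  exact (Finset.card_eq_sum_card_fiberwise (fun v _ => Finset.mem_univ _)).symm

/-- `φ_{S,T_S} = ι(τ)` where `τ` is the transposition of the two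
vertices of `S` (which is an automorphism of `G`). -/
theorem phi_full_is_induced [Fintype V] [DecidableEq V] (G : SimpleGraph V)
    (hG : G.Connected) (x y : V) (hS : SameNbrCut G {x, y}) (k : ℕ)
    (hk1 : 1 ≤ k) (hk2 : k ≤ Fintype.card V - 1) :
    (∀ a b : V, G.Adj (Equiv.swap x y a) (Equiv.swap x y b) ↔ G.Adj a b) ∧
      ∀ A : Finset V, A.card = k →
        phiFun G {x, y} (TS G {x, y} k) A = Finset.image (Equiv.swap x y) A := by
  classical
  obtain ⟨hcard, hdisc, hnbr⟩ := hS
  have hxy : x ≠ y := by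
    intro h; subst h; simp at hcard
  have key : ∀ v, v ∉ ({x, y} : Finset V) → ∀ a, G.Adj a v →
      G.Adj (Equiv.swap x y a) v := by
    intro v hv a hadj
    by_cases hax : a = x
    · rw [hax, Equiv.swap_apply_left]
      exact (hnbr x (by simp) y (by simp) v hv).mp (hax ▸ hadj)
    by_cases hay : a = y
    · rw [hay, Equiv.swap_apply_right]
      exact (hnbr y (by simp) x (by simp) v hv).mp (hay ▸ hadj)
    · rwa [Equiv.swap_apply_of_ne_of_ne hax hay]
  have main : ∀ a b, G.Adj a b → G.Adj (Equiv.swap x y a) (Equiv.swap x y b) := by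
    intro a b hab
    by_cases hb : b ∈ ({x, y} : Finset V)
    · by_cases ha : a ∈ ({x, y} : Finset V)
      · simp only [Finset.mem_insert, Finset.mem_singleton] at ha hb
        have hne := hab.ne
        rcases ha with rfl | rfl <;> rcases hb with rfl | rfl <;>
          simp_all [Equiv.swap_apply_left, Equiv.swap_apply_right, SimpleGraph.adj_comm]
      · simp only [Finset.mem_insert, Finset.mem_singleton, not_or] at ha
        rw [Equiv.swap_apply_of_ne_of_ne ha.1 ha.2]
        have : a ∉ ({x, y} : Finset V) := by simp [ha.1, ha.2]
        exact (key a this b hab.symm).symm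
    · simp only [Finset.mem_insert, Finset.mem_singleton, not_or] at hb
      rw [Equiv.swap_apply_of_ne_of_ne hb.1 hb.2]
      exact key b (by simp [hb.1, hb.2]) a hab
  refine ⟨fun a b => ⟨fun h => ?_, main a b⟩, ?_⟩
  · have := main _ _ h
    simpa [Equiv.swap_apply_self] using this
  intro A hA
  have hm2 : (A ∩ {x, y}).card ≤ 2 := by
    calc (A ∩ {x, y}).card ≤ ({x, y} : Finset V).card :=
          Finset.card_le_card Finset.inter_subset_right
      _ = 2 := hcard
  have hmk : (A ∩ {x, y}).card ≤ k := hA ▸ Finset.card_le_card Finset.inter_subset_left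
  have hsd : (A \ {x, y}).card + (A ∩ {x, y}).card = A.card :=
    Finset.card_sdiff_add_card_inter A {x, y}
  have hsum := sum_compDist G {x, y} A
  have hTS : compDist G {x, y} A ∈ TS G {x, y} k ↔ (A ∩ {x, y}).card = 1 := by
    constructor
    · rintro ⟨-, h⟩
      rw [hsum] at h
      omega
    · intro h
      exact ⟨compDist_le G {x, y} A, by rw [hsum]; omega⟩
  rw [phiFun]
  by_cases hc : compDist G {x, y} A ∈ TS G {x, y} k
  · rw [if_pos hc]
    have hm : (A ∩ {x, y}).card = 1 := hTS.mp hc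
    have hone : (x ∈ A ∧ y ∉ A) ∨ (y ∈ A ∧ x ∉ A) := by
      by_cases hx : x ∈ A <;> by_cases hy : y ∈ A
      · exfalso
        have : A ∩ {x, y} = {x, y} := by
          apply Finset.inter_eq_right.mpr
          intro v hv
          simp only [Finset.mem_insert, Finset.mem_singleton] at hv
          rcases hv with rfl | rfl <;> assumption
        rw [this, hcard] at hm
        omega
      · exact Or.inl ⟨hx, hy⟩
      · exact Or.inr ⟨hy, hx⟩
      · exfalso
        have : A ∩ {x, y} = ∅ := by
          ext v
          simp only [Finset.mem_inter, Finset.mem_insert, Finset.mem_singleton,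
            Finset.notMem_empty, iff_false, not_and]
          rintro hv (rfl | rfl)
          · exact hx hv
          · exact hy hv
        rw [this] at hm
        simp at hm
    ext v
    rw [mem_image_swap]
    simp only [tokenMove, Finset.mem_union, Finset.mem_sdiff, Finset.mem_insert,
      Finset.mem_singleton]
    rcases hone with ⟨hx, hy⟩ | ⟨hy, hx⟩
    · by_cases hvx : v = x
      · subst hvx
        simp [Equiv.swap_apply_left, hx, hy]
      by_cases hvy : v = y
      · subst hvy
        simp [Equiv.swap_apply_right, hx, hy, Ne.symm hxy]
      · rw [Equiv.swap_apply_of_ne_of_ne hvx hvy]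
        simp [hvx, hvy]
    · by_cases hvx : v = x
      · subst hvx
        simp [Equiv.swap_apply_left, hx, hy]
      by_cases hvy : v = y
      · subst hvy
        simp [Equiv.swap_apply_right, hx, hy, Ne.symm hxy]
      · rw [Equiv.swap_apply_of_ne_of_ne hvx hvy]
        simp [hvx, hvy]
  · rw [if_neg hc]
    have hm : (A ∩ {x, y}).card ≠ 1 := fun h => hc (hTS.mpr h)
    have hiff : x ∈ A ↔ y ∈ A := by
      by_cases hx : x ∈ A <;> by_cases hy : y ∈ A <;> try tauto
      · exfalso
        apply hm
        have : A ∩ {x, y} = {x} := by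
          ext v
          simp only [Finset.mem_inter, Finset.mem_insert, Finset.mem_singleton]
          constructor
          · rintro ⟨hv, rfl | rfl⟩
            · rfl
            · exact absurd hv hy
          · rintro rfl; exact ⟨hx, Or.inl rfl⟩
        rw [this]; simp
      · exfalso
        apply hm
        have : A ∩ {x, y} = {y} := by
          ext v
          simp only [Finset.mem_inter, Finset.mem_insert, Finset.mem_singleton]
          constructor
          · rintro ⟨hv, rfl | rfl⟩
            · exact absurd hv hx
            · rfl
          · rintro rfl; exact ⟨hy, Or.inr rfl⟩
        rw [this]; simp
    ext v
    rw [mem_image_swap]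
    by_cases hvx : v = x
    · subst hvx
      rw [Equiv.swap_apply_left]
      exact hiff
    by_cases hvy : v = y
    · subst hvy
      rw [Equiv.swap_apply_right]
      exact hiff.symm
    · rw [Equiv.swap_apply_of_ne_of_ne hvx hvy]
end
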